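/- Let f(x) = x^4 + a_3 x^3 + a_2 x^2 + a_1 x + a_0 be a monic irreducible polynomial over ℚ with roots α_1, α_2, α_3, α_4. If there exist rational numbers m_1, ..., m_4, m, not all m_i equal, with ∑ m_i α_i = m, then f is decomposable: f(x) = g(h(x)) for some quadratic polynomials g, h ∈ ℚ[x]. -/

import Mathlib

open Polynomial Finset

private lemma prodX (a b c d : ℂ) : (X - C a) * (X - C b) * (X - C c) * (X - C d)
    = X^4 - C (a+b+c+d)*X^3 + C (a*b+a*c+a*d+b*c+b*d+c*d)*X^2
      - C (a*b*c+a*b*d+a*c*d+b*c*d)*X + C (a*b*c*d) := by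
  simp only [map_add, map_mul]; ring

private lemma univ4 {a b c d : Fin 4} (hab : a ≠ b) (hac : a ≠ c)
    (had : a ≠ d) (hbc : b ≠ c) (hbd : b ≠ d) (hcd : c ≠ d) :
    ({a,b,c,d} : Finset (Fin 4)) = Finset.univ := by
  apply Finset.eq_univ_of_card
  rw [Finset.card_insert_of_notMem (by simp [hab, hac, had]),
      Finset.card_insert_of_notMem (by simp [hbc, hbd]),
      Finset.card_insert_of_notMem (by simp [hcd]), Finset.card_singleton]
  rfl

private lemma sum4 {M : Type*} [AddCommMonoid M] {a b c d : Fin 4} (hab : a ≠ b) (hac : a ≠ c)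
    (had : a ≠ d) (hbc : b ≠ c) (hbd : b ≠ d) (hcd : c ≠ d) (F : Fin 4 → M) :
    ∑ m, F m = F a + F b + F c + F d := by
  rw [← univ4 hab hac had hbc hbd hcd, Finset.sum_insert (by simp [hab, hac, had]),
      Finset.sum_insert (by simp [hbc, hbd]), Finset.sum_insert (by simp [hcd]),
      Finset.sum_singleton, add_assoc, add_assoc]

private lemma prod4 {M : Type*} [CommMonoid M] {a b c d : Fin 4} (hab : a ≠ b) (hac : a ≠ c)
    (had : a ≠ d) (hbc : b ≠ c) (hbd : b ≠ d) (hcd : c ≠ d) (F : Fin 4 → M) :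
    ∏ m, F m = F a * F b * F c * F d := by
  rw [← univ4 hab hac had hbc hbd hcd, Finset.prod_insert (by simp [hab, hac, had]),
      Finset.prod_insert (by simp [hbc, hbd]), Finset.prod_insert (by simp [hcd]),
      Finset.prod_singleton, mul_assoc, mul_assoc]

private lemma cover4 {a b c d : Fin 4} (hab : a ≠ b) (hac : a ≠ c)
    (had : a ≠ d) (hbc : b ≠ c) (hbd : b ≠ d) (hcd : c ≠ d) (x : Fin 4) :
    x = a ∨ x = b ∨ x = c ∨ x = d := by
  have := (univ4 hab hac had hbc hbd hcd) ▸ Finset.mem_univ x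
  simpa using this

private lemma perm_sq_or :
    ∀ e : Equiv.Perm (Fin 4), (∀ x, e x ≠ x) → (∀ x, e (e x) = x) ∨ (∀ x, e (e x) ≠ x) := by decide

private lemma perm_four :
    ∀ e : Equiv.Perm (Fin 4), (∀ x, e x ≠ x) → (∀ x, e (e x) ≠ x) → ∀ x, e (e (e (e x))) = x := by decide

private lemma fpf_exists {G : Type*} [Group G] [Fintype G] (ind : G → Fin 4 → Fin 4)
    (hind_mul : ∀ σ τ i, ind (σ * τ) i = ind σ (ind τ i))
    (hind_one : ∀ i, ind 1 i = i)
    (htrans : ∀ i j : Fin 4, ∃ σ, ind σ i = j) :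
    ∃ σ : G, ∀ x, ind σ x ≠ x := by
  classical
  by_contra hcon
  push_neg at hcon
  have hst : ∀ x : Fin 4, 4 * (Finset.univ.filter fun σ : G => ind σ x = x).card = Fintype.card G := by
    intro x
    have hfib : ∀ y : Fin 4, (Finset.univ.filter fun σ : G => ind σ x = y).card
        = (Finset.univ.filter fun σ : G => ind σ x = x).card := by
      intro y
      obtain ⟨τ, hτ⟩ := htrans x y
      have hτinv : ∀ i, ind τ⁻¹ (ind τ i) = i := by
        intro i; rw [← hind_mul, inv_mul_cancel, hind_one]
      apply Finset.card_bij' (fun σ _ => τ⁻¹ * σ) (fun ρ _ => τ * ρ)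
      · intro σ hσ
        simp only [Finset.mem_filter, Finset.mem_univ, true_and] at hσ ⊢
        rw [hind_mul, hσ, ← hτ, hτinv]
      · intro ρ hρ
        simp only [Finset.mem_filter, Finset.mem_univ, true_and] at hρ ⊢
        rw [hind_mul, hρ, hτ]
      · intro σ _; rw [← mul_assoc, mul_inv_cancel, one_mul]
      · intro ρ _; rw [← mul_assoc, inv_mul_cancel, one_mul]
    have hpart : Fintype.card G = ∑ y : Fin 4, (Finset.univ.filter fun σ : G => ind σ x = y).card := by
      rw [← Finset.card_univ]
      exact Finset.card_eq_sum_card_fiberwise (fun σ _ => Finset.mem_univ (ind σ x))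
    rw [hpart, Finset.sum_congr rfl (fun y _ => hfib y)]
    simp [Finset.sum_const, mul_comm]
  have hN : ∑ σ : G, (Finset.univ.filter fun x : Fin 4 => ind σ x = x).card
      = ∑ x : Fin 4, (Finset.univ.filter fun σ : G => ind σ x = x).card := by
    simp only [Finset.card_filter]
    exact Finset.sum_comm
  have hRHS : ∑ x : Fin 4, (Finset.univ.filter fun σ : G => ind σ x = x).card = Fintype.card G := by
    have hcong : ∀ x : Fin 4, (Finset.univ.filter fun σ : G => ind σ x = x).card
        = (Finset.univ.filter fun σ : G => ind σ 0 = 0).card := by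
      intro x
      have h1 := hst x
      have h2 := hst 0
      omega
    rw [Finset.sum_congr rfl (fun x _ => hcong x)]
    have := hst 0
    simp only [Finset.sum_const, Finset.card_univ, Fintype.card_fin, smul_eq_mul]
    omega
  have hone : (Finset.univ.filter fun x : Fin 4 => ind 1 x = x).card = 4 := by
    rw [Finset.filter_true_of_mem (fun x _ => hind_one x)]
    simp
  have hge : ∀ σ : G, 1 ≤ (Finset.univ.filter fun x : Fin 4 => ind σ x = x).card := by
    intro σ
    obtain ⟨x, hx⟩ := hcon σ
    exact Finset.card_pos.mpr ⟨x, Finset.mem_filter.mpr ⟨Finset.mem_univ x, hx⟩⟩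
  have hsplit : ∑ σ : G, (Finset.univ.filter fun x : Fin 4 => ind σ x = x).card
      = (Finset.univ.filter fun x : Fin 4 => ind 1 x = x).card
        + ∑ σ ∈ Finset.univ.erase (1 : G), (Finset.univ.filter fun x : Fin 4 => ind σ x = x).card :=
    (Finset.add_sum_erase _ _ (Finset.mem_univ 1)).symm
  have hlow : Fintype.card G - 1 ≤ ∑ σ ∈ Finset.univ.erase (1 : G),
      (Finset.univ.filter fun x : Fin 4 => ind σ x = x).card := by
    calc Fintype.card G - 1 = (Finset.univ.erase (1 : G)).card := by
          rw [Finset.card_erase_of_mem (Finset.mem_univ 1), Finset.card_univ]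
      _ = ∑ _σ ∈ Finset.univ.erase (1 : G), 1 := by simp
      _ ≤ _ := Finset.sum_le_sum (fun σ _ => hge σ)
  have hpos : 0 < Fintype.card G := Fintype.card_pos
  omega

set_option linter.unreachableTactic false in
set_option linter.unusedTactic false in
set_option linter.unreachableTactic false in
set_option linter.unusedTactic false in
private lemma core {L : Type*} [Field L] [Algebra ℚ L] (β : Fin 4 → L) (hβ : Function.Injective β)
    (ι : Equiv.Perm (Fin 4)) (hι : ∀ x, ι (ι x) = x) (hιfpf : ∀ x, ι x ≠ x)
    (hιR : ∀ v : Fin 4 → ℚ, (∑ i, algebraMap ℚ L (v i) * β i = 0) →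
      (∑ i, algebraMap ℚ L (v (ι i)) * β i = 0))
    (htrans : ∀ i j : Fin 4, ∃ e : Equiv.Perm (Fin 4), e i = j ∧
      ∀ v : Fin 4 → ℚ, (∑ i, algebraMap ℚ L (v i) * β i = 0) →
        (∑ i, algebraMap ℚ L (v (e i)) * β i = 0))
    (v : Fin 4 → ℚ) (hv : v ≠ 0) (hvsum : ∑ i, v i = 0)
    (hvR : ∑ i, algebraMap ℚ L (v i) * β i = 0) :
    ∃ a b c d : Fin 4, a ≠ b ∧ a ≠ c ∧ a ≠ d ∧ b ≠ c ∧ b ≠ d ∧ c ≠ d ∧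
      β a + β b = β c + β d := by
  set Q : ℚ →+* L := algebraMap ℚ L with hQdef
  have hQinj : Function.Injective Q := Q.injective
  have hQne : ∀ x : ℚ, x ≠ 0 → Q x ≠ 0 := by
    intro x hx h; exact hx (hQinj (by simpa using h))
  -- positions
  set j0 : Fin 4 := ι 0 with hj0def
  have h0j : (0 : Fin 4) ≠ j0 := fun h => hιfpf 0 h.symm
  set k0 : Fin 4 := if j0 = 1 then 2 else 1 with hk0def
  have h0k : (0 : Fin 4) ≠ k0 := by
    rcases eq_or_ne j0 1 with h | h <;> simp [hk0def, h]
  have hjk : j0 ≠ k0 := by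
    rcases eq_or_ne j0 1 with h | h <;> simp [hk0def, h] <;> omega
  set l0 : Fin 4 := ι k0 with hl0def
  have hkl : k0 ≠ l0 := fun h => hιfpf k0 h.symm
  have hιj : ι j0 = 0 := hι 0
  have hιl : ι l0 = k0 := hι k0
  have h0l : (0 : Fin 4) ≠ l0 := by
    intro h; apply hjk; rw [hj0def, h, hιl]
  have hjl : j0 ≠ l0 := by
    intro h; apply h0k; rw [← hιj, h, hιl]
  -- sum decomposition helpers
  have S4L : ∀ F : Fin 4 → L, ∑ i, F i = F 0 + F j0 + F k0 + F l0 :=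
    fun F => sum4 h0j h0k h0l hjk hjl hkl F
  have S4Q : ∀ F : Fin 4 → ℚ, ∑ i, F i = F 0 + F j0 + F k0 + F l0 :=
    fun F => sum4 h0j h0k h0l hjk hjl hkl F
  have hRel4 : ∀ u : Fin 4 → ℚ, (∑ i, Q (u i) * β i = 0) →
      Q (u 0) * β 0 + Q (u j0) * β j0 + Q (u k0) * β k0 + Q (u l0) * β l0 = 0 := by
    intro u hu; rw [← S4L (fun i => Q (u i) * β i)]; exact hu
  -- scalar closure
  have hsmul : ∀ (u : Fin 4 → ℚ) (x : ℚ), (∑ i, Q (u i) * β i = 0) →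
      (∑ i, Q (x * u i) * β i = 0) := by
    intro u x hu
    have : ∀ i : Fin 4, Q (x * u i) * β i = Q x * (Q (u i) * β i) := by
      intro i; rw [map_mul]; ring
    rw [Finset.sum_congr rfl (fun i _ => this i), ← Finset.mul_sum, hu, mul_zero]
  -- cancellation helper
  have hcan : ∀ (x : ℚ) (i j : Fin 4), x ≠ 0 → Q x * (β i - β j) = 0 → i = j := by
    intro x i j hx h
    rcases mul_eq_zero.mp h with h' | h'
    · exact absurd h' (hQne x hx)
    · exact hβ (sub_eq_zero.mp h')
  -- main relations
  have h1 := hRel4 v hvR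
  have h2' := hιR v hvR
  have h2 : Q (v j0) * β 0 + Q (v 0) * β j0 + Q (v l0) * β k0 + Q (v k0) * β l0 = 0 := by
    have h2a := hRel4 (fun i => v (ι i)) h2'
    simpa only [hιj, hιl, ← hj0def, ← hl0def] using h2a
  -- h2 : Q (v j0) * β 0 + Q (v 0) * β j0 + Q (v l0) * β k0 + Q (v k0) * β l0 = 0
  have hs : v 0 + v j0 + v k0 + v l0 = 0 := by
    rw [← S4Q v]; exact hvsum
  by_cases hab : v 0 + v j0 = 0
  case neg =>
    -- pairing (0,j0 | k0,l0)
    have h3 : Q (v k0 + v l0) = - Q (v 0 + v j0) := by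
      rw [← map_neg]; congr 1; linarith
    have key : Q (v 0 + v j0) * ((β 0 + β j0) - (β k0 + β l0)) = 0 := by
      simp only [map_add] at h3 ⊢
      linear_combination h1 + h2 - (β k0 + β l0) * h3
    refine ⟨0, j0, k0, l0, h0j, h0k, h0l, hjk, hjl, hkl, ?_⟩
    rcases mul_eq_zero.mp key with h' | h'
    · exact absurd h' (hQne _ hab)
    · exact sub_eq_zero.mp h'
  case pos =>
  have hcd : v k0 + v l0 = 0 := by linarith
  by_cases ha : v 0 = 0
  · by_cases hc : v k0 = 0
    · exfalso; apply hv
      funext x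
      rcases cover4 h0j h0k h0l hjk hjl hkl x with rfl | rfl | rfl | rfl
      · exact ha
      · show v j0 = 0; linarith
      · exact hc
      · show v l0 = 0; linarith
    · exfalso
      have hb0 : v j0 = 0 := by linarith
      have hd0 : v l0 = -v k0 := by linarith
      rw [ha, hb0, hd0] at h1
      have : Q (v k0) * (β k0 - β l0) = 0 := by
        simp only [map_neg, map_zero] at h1 ⊢
        linear_combination h1
      exact hkl (hcan _ _ _ hc this)
  · by_cases hc : v k0 = 0
    · exfalso
      have hb0 : v j0 = -v 0 := by linarith
      have hd0 : v l0 = 0 := by linarith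
      rw [hc, hb0, hd0] at h1
      have : Q (v 0) * (β 0 - β j0) = 0 := by
        simp only [map_neg, map_zero] at h1 ⊢
        linear_combination h1
      exact h0j (hcan _ _ _ ha this)
    · -- main case
      set r : ℚ := v k0 / v 0 with hrdef
      have hr0 : r ≠ 0 := div_ne_zero hc ha
      set v' : Fin 4 → ℚ := fun i => (v 0)⁻¹ * v i with hv'def
      have hv'R : ∑ i, Q (v' i) * β i = 0 := hsmul v ((v 0)⁻¹) hvR
      have hv'0 : v' 0 = 1 := by rw [hv'def]; exact inv_mul_cancel₀ ha
      have hv'j : v' j0 = -1 := by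
        have : v j0 = -v 0 := by linarith
        rw [hv'def]; simp only []; rw [this]; field_simp
      have hv'k : v' k0 = r := by rw [hv'def, hrdef]; field_simp
      have hv'l : v' l0 = -r := by
        have : v l0 = -v k0 := by linarith
        rw [hv'def, hrdef]; simp only []; rw [this]; field_simp
      have hv'sum : ∑ i, v' i = 0 := by
        rw [S4Q v', hv'0, hv'j, hv'k, hv'l]; ring
      have h1v : β 0 - β j0 + Q r * β k0 - Q r * β l0 = 0 := by
        have h1va := hRel4 v' hv'R
        rw [hv'0, hv'j, hv'k, hv'l] at h1va
        simp only [map_one, map_neg, one_mul, neg_mul] at h1va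
        linear_combination h1va
      -- translate: get w with w k0 = 1
      obtain ⟨e, he, heR⟩ := htrans k0 0
      set w : Fin 4 → ℚ := fun i => v' (e i) with hwdef
      have hwR : ∑ i, Q (w i) * β i = 0 := heR v' hv'R
      have hwk : w k0 = 1 := by rw [hwdef]; simp only []; rw [he, hv'0]
      have hwsum : ∑ i, w i = 0 := by
        rw [hwdef]
        rw [Equiv.sum_comp e v']
        exact hv'sum
      have hws : w 0 + w j0 + w k0 + w l0 = 0 := by rw [← S4Q w]; exact hwsum
      have h1w := hRel4 w hwR
      have h2w' := hιR w hwR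
      have h2w : Q (w j0) * β 0 + Q (w 0) * β j0 + Q (w l0) * β k0 + Q (w k0) * β l0 = 0 := by
        have h2wa := hRel4 (fun i => w (ι i)) h2w'
        simpa only [hιj, hιl, ← hj0def, ← hl0def] using h2wa
      by_cases hD : (1 : ℚ) + w l0 = 0
      case neg =>
        -- pairing (k0,l0 | 0,j0)
        have h3' : w 0 + w j0 = -(1 + w l0) := by rw [hwk] at hws; linarith
        have h3 : Q (w 0 + w j0) = - Q (1 + w l0) := by rw [h3', map_neg]
        have key : Q (1 + w l0) * ((β k0 + β l0) - (β 0 + β j0)) = 0 := by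
          rw [hwk] at h1w h2w
          simp only [map_add, map_one, one_mul] at h3 h1w h2w ⊢
          linear_combination h1w + h2w - (β 0 + β j0) * h3
        refine ⟨k0, l0, 0, j0, hkl, h0k.symm, hjk.symm, h0l.symm, hjl.symm, h0j, ?_⟩
        rcases mul_eq_zero.mp key with h' | h'
        · exact absurd h' (hQne _ hD)
        · exact sub_eq_zero.mp h'
      case pos =>
      have hwl : w l0 = -1 := by linarith
      have hwj : w j0 = -w 0 := by rw [hwk, hwl] at hws; linarith
      -- derive r * w 0 = 1
      have hkey2 : Q (1 - r * w 0) * (β 0 - β j0) = 0 := by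
        rw [hwk, hwl, hwj] at h1w
        simp only [map_sub, map_mul, map_one, map_neg, one_mul, neg_mul] at h1w ⊢
        linear_combination h1v - Q r * h1w
      have hra : r * w 0 = 1 := by
        by_contra hne'
        exact h0j (hcan _ _ _ (sub_ne_zero.mpr (fun h => hne' h.symm)) hkey2)
      -- case on e 0
      have he0 : e 0 ≠ 0 := by
        intro h
        exact h0k (e.injective (h.trans he.symm))
      have hw0 : w 0 = v' (e 0) := rfl
      rcases cover4 h0j h0k h0l hjk hjl hkl (e 0) with h' | h' | h' | h'
      · exact absurd h' he0
      · -- w 0 = -1, so r = -1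
        have hw0v : w 0 = -1 := by rw [hw0, h', hv'j]
        have hrm : r = -1 := by rw [hw0v] at hra; linarith
        refine ⟨0, l0, j0, k0, h0l, h0j, h0k, hjl.symm, hkl.symm, hjk, ?_⟩
        have hQr : Q r = -1 := by rw [hrm]; simp
        linear_combination h1v - (β k0 - β l0) * hQr
      · -- w 0 = r, so r^2 = 1
        have hw0v : w 0 = r := by rw [hw0, h', hv'k]
        rw [hw0v] at hra
        have : (r - 1) * (r + 1) = 0 := by linear_combination hra
        rcases mul_eq_zero.mp this with h'' | h''
        · have hr1 : r = 1 := by linarith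
          refine ⟨0, k0, j0, l0, h0k, h0j, h0l, hjk.symm, hkl, hjl, ?_⟩
          have hQr : Q r = 1 := by rw [hr1]; simp
          linear_combination h1v - (β k0 - β l0) * hQr
        · have hrm : r = -1 := by linarith
          refine ⟨0, l0, j0, k0, h0l, h0j, h0k, hjl.symm, hkl.symm, hjk, ?_⟩
          have hQr : Q r = -1 := by rw [hrm]; simp
          linear_combination h1v - (β k0 - β l0) * hQr
      · -- w 0 = -r: -r^2 = 1 impossible
        exfalso
        have hw0v : w 0 = -r := by rw [hw0, h', hv'l]
        rw [hw0v] at hra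
        nlinarith [sq_nonneg r]
theorem stmt_5 (f : Polynomial ℚ) (hmonic : f.Monic) (hirr : Irreducible f)
    (hdeg : f.natDegree = 4) (α : Fin 4 → ℂ)
    (hroots : f.map (algebraMap ℚ ℂ) = ∏ i, (Polynomial.X - Polynomial.C (α i)))
    (m : Fin 4 → ℚ) (m0 : ℚ)
    (hrel : ∑ i, (m i : ℂ) * α i = (m0 : ℂ))
    (hne : ∃ i j, m i ≠ m j) :
    ∃ g h : Polynomial ℚ, g.natDegree = 2 ∧ h.natDegree = 2 ∧ f = g.comp h := by
  classical
  have hf0 : f ≠ 0 := hmonic.ne_zero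
  have hsep : f.Separable := hirr.separable
  have hrootsC : (f.map (algebraMap ℚ ℂ)).roots = Finset.univ.val.map α := by
    rw [hroots]
    have h : ∏ i, (X - C (α i)) = (Multiset.map (fun a => X - C a) (Finset.univ.val.map α)).prod := by
      rw [Multiset.map_map]
      rfl
    rw [h, roots_multiset_prod_X_sub_C]
  have hαinj : Function.Injective α := by
    have hnd : ((Finset.univ.val : Multiset (Fin 4)).map α).Nodup := by
      rw [← hrootsC]; exact nodup_roots hsep.map
    intro i j hij
    exact Multiset.inj_on_of_nodup_map hnd i (by simp) j (by simp) hij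
  -- splitting field
  set L := f.SplittingField with hLdef
  have hsplits : (f.map (algebraMap ℚ L)).Splits := SplittingField.splits f
  haveI : IsSplittingField ℚ L f := Polynomial.IsSplittingField.splittingField f
  haveI : Normal ℚ L := Polynomial.SplittingField.instNormal f
  set ψ : L →ₐ[ℚ] ℂ := IsSplittingField.lift L f (IsAlgClosed.splits (f.map (algebraMap ℚ ℂ))) with hψdef
  have hψinj : Function.Injective ψ := ψ.toRingHom.injective
  have hmaps : (f.map (algebraMap ℚ L)).roots.map (ψ : L → ℂ) = Finset.univ.val.map α := by
    rw [← hrootsC]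
    have h1 : f.map (algebraMap ℚ ℂ) = (f.map (algebraMap ℚ L)).map ψ.toRingHom := by
      rw [Polynomial.map_map]
      congr 1
      apply RingHom.ext
      intro x
      simp [ψ.commutes x]
    rw [h1, hsplits.roots_map ψ.toRingHom]
    rfl
  have hβex : ∀ i : Fin 4, ∃ b : L, b ∈ (f.map (algebraMap ℚ L)).roots ∧ ψ b = α i := by
    intro i
    have : α i ∈ (f.map (algebraMap ℚ L)).roots.map (ψ : L → ℂ) := by
      rw [hmaps]; exact Multiset.mem_map_of_mem α (by simp)
    obtain ⟨b, hb, hb2⟩ := Multiset.mem_map.mp this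
    exact ⟨b, hb, hb2⟩
  set β : Fin 4 → L := fun i => Classical.choose (hβex i) with hβdef
  have hβroot : ∀ i, β i ∈ (f.map (algebraMap ℚ L)).roots := fun i => (Classical.choose_spec (hβex i)).1
  have hψβ : ∀ i, ψ (β i) = α i := fun i => (Classical.choose_spec (hβex i)).2
  have hβinj : Function.Injective β := by
    intro i j hij
    apply hαinj; rw [← hψβ i, ← hψβ j, hij]
  have hrootmem : ∀ x ∈ (f.map (algebraMap ℚ L)).roots, ∃ i, β i = x := by
    intro x hx
    have : ψ x ∈ Finset.univ.val.map α := by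
      rw [← hmaps]; exact Multiset.mem_map_of_mem _ hx
    obtain ⟨i, _, hi⟩ := Multiset.mem_map.mp this
    exact ⟨i, hψinj (by rw [hψβ i, hi])⟩
  have hmapne : f.map (algebraMap ℚ L) ≠ 0 := by
    simpa using (Polynomial.map_ne_zero_iff (algebraMap ℚ L).injective).mpr hf0
  have hrootaeval : ∀ x : L, aeval x f = 0 → ∃ i, β i = x := by
    intro x hx
    apply hrootmem
    rw [mem_roots hmapne, IsRoot.def, eval_map, ← aeval_def]
    exact hx
  have hβaeval : ∀ i, aeval (β i) f = 0 := by
    intro i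
    have := hβroot i
    rw [mem_roots hmapne, IsRoot.def, eval_map, ← aeval_def] at this
    exact this
  -- index action of the Galois group
  have hindex : ∀ (σ : L ≃ₐ[ℚ] L) (i : Fin 4), ∃ j, β j = σ (β i) := by
    intro σ i
    apply hrootaeval
    have h := aeval_algHom_apply σ.toAlgHom (β i) f
    rw [hβaeval i, map_zero] at h
    simpa using h
  set ind : (L ≃ₐ[ℚ] L) → Fin 4 → Fin 4 := fun σ i => Classical.choose (hindex σ i) with hinddef
  have hind : ∀ σ i, β (ind σ i) = σ (β i) := fun σ i => Classical.choose_spec (hindex σ i)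
  have hind_mul : ∀ σ τ i, ind (σ * τ) i = ind σ (ind τ i) := by
    intro σ τ i
    apply hβinj
    rw [hind, hind, hind]
    rfl
  have hind_one : ∀ i, ind 1 i = i := by
    intro i; apply hβinj; rw [hind]; rfl
  have hind_inj : ∀ σ, Function.Injective (ind σ) := by
    intro σ i j hij
    apply hβinj
    apply σ.injective
    rw [← hind, ← hind, hij]
  have hind_bij : ∀ σ, Function.Bijective (ind σ) :=
    fun σ => Finite.injective_iff_bijective.mp (hind_inj σ)
  haveI : Fact ((f.map (algebraMap ℚ L)).Splits) := ⟨hsplits⟩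
  have htrans : ∀ i j : Fin 4, ∃ σ : L ≃ₐ[ℚ] L, ind σ i = j := by
    intro i j
    haveI := Polynomial.Gal.galAction_isPretransitive f L hirr
    have hmem : ∀ k : Fin 4, β k ∈ f.rootSet L := by
      intro k
      rw [Polynomial.mem_rootSet]
      exact ⟨hf0, hβaeval k⟩
    obtain ⟨σ, hσ⟩ := MulAction.exists_smul_eq f.Gal (⟨β i, hmem i⟩ : f.rootSet L) ⟨β j, hmem j⟩
    obtain ⟨ϕ, hϕ⟩ := Polynomial.Gal.restrict_surjective f L σ
    have := Polynomial.Gal.restrict_smul ϕ (⟨β i, hmem i⟩ : f.rootSet L)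
    rw [hϕ, hσ] at this
    refine ⟨ϕ, hβinj ?_⟩
    rw [hind]
    exact this.symm ▸ rfl
  -- closure of relations under the Galois action
  have hRcomp : ∀ (σ : L ≃ₐ[ℚ] L) (v : Fin 4 → ℚ),
      (∑ i, algebraMap ℚ L (v i) * β i = 0) →
      (∑ i, algebraMap ℚ L (v (ind σ i)) * β i = 0) := by
    intro σ v hv
    have h1 : ∑ i, algebraMap ℚ L (v i) * β (ind σ⁻¹ i) = 0 := by
      have h : σ⁻¹ (∑ i, algebraMap ℚ L (v i) * β i) = 0 := by rw [hv]; exact map_zero _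
      rw [map_sum] at h
      rw [← h]
      apply Finset.sum_congr rfl
      intro i _
      rw [map_mul, AlgEquiv.commutes, hind]
    have hinv : ∀ i, ind σ⁻¹ (ind σ i) = i := by
      intro i; rw [← hind_mul, inv_mul_cancel, hind_one]
    calc ∑ i, algebraMap ℚ L (v (ind σ i)) * β i
        = ∑ i, algebraMap ℚ L (v (ind σ i)) * β (ind σ⁻¹ (ind σ i)) := by
          apply Finset.sum_congr rfl; intro i _; rw [hinv]
      _ = ∑ i, algebraMap ℚ L (v i) * β (ind σ⁻¹ i) :=
          Equiv.sum_comp (Equiv.ofBijective (ind σ) (hind_bij σ))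
            (fun j => algebraMap ℚ L (v j) * β (ind σ⁻¹ j))
      _ = 0 := h1
  -- coefficient extraction (coeff 3)
  have hexp : f.map (algebraMap ℚ ℂ) = (X - C (α 0)) * (X - C (α 1)) * (X - C (α 2)) * (X - C (α 3)) := by
    rw [hroots, Fin.prod_univ_four]
  have hc3 : algebraMap ℚ ℂ (f.coeff 3) = -(α 0 + α 1 + α 2 + α 3) := by
    have h := congrArg (fun p => Polynomial.coeff p 3) hexp
    simp only [coeff_map] at h
    rw [h, prodX]
    simp only [coeff_add, coeff_sub, coeff_C_mul, coeff_X_pow, coeff_C, coeff_X]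
    norm_num
  -- the shifted relation vector
  set μ : ℚ := (m 0 + m 1 + m 2 + m 3) / 4 with hμdef
  set mv : Fin 4 → ℚ := fun i => m i - μ with hmvdef
  set c : ℚ := m0 + μ * f.coeff 3 with hcdef
  have hcast : ∀ x : ℚ, algebraMap ℚ ℂ x = (x : ℂ) := fun x => eq_ratCast _ x
  have hrelC : ∑ i, algebraMap ℚ ℂ (mv i) * α i = algebraMap ℚ ℂ c := by
    rw [Fin.sum_univ_four]
    rw [Fin.sum_univ_four] at hrel
    have hc3x : ((f.coeff 3 : ℚ) : ℂ) = -(α 0 + α 1 + α 2 + α 3) := by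
      rw [← hcast]; exact hc3
    simp only [hmvdef, hcdef, hcast]
    push_cast
    linear_combination hrel - (μ : ℂ) * hc3x
  have hrelL : ∑ i, algebraMap ℚ L (mv i) * β i = algebraMap ℚ L c := by
    apply hψinj
    rw [map_sum]
    have : ∀ i : Fin 4, ψ (algebraMap ℚ L (mv i) * β i) = algebraMap ℚ ℂ (mv i) * α i := by
      intro i
      rw [map_mul, AlgHom.commutes, hψβ]
    rw [Finset.sum_congr rfl (fun i _ => this i), hrelC, AlgHom.commutes]
  -- trace argument : c = 0
  haveI : CharZero L := charZero_of_injective_algebraMap (algebraMap ℚ L).injective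
  have hS : ∀ i, (∑ σ : L ≃ₐ[ℚ] L, β (ind σ i)) = ∑ σ : L ≃ₐ[ℚ] L, β (ind σ 0) := by
    intro i
    obtain ⟨τ, hτ⟩ := htrans 0 i
    calc ∑ σ : L ≃ₐ[ℚ] L, β (ind σ i) = ∑ σ : L ≃ₐ[ℚ] L, β (ind (σ * τ) 0) := by
          apply Finset.sum_congr rfl; intro σ _; rw [hind_mul, hτ]
      _ = ∑ σ : L ≃ₐ[ℚ] L, β (ind σ 0) :=
          Fintype.sum_equiv (Equiv.mulRight τ) _ _ (fun σ => rfl)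
  have hmvsum : ∑ i, mv i = 0 := by
    rw [Fin.sum_univ_four]
    simp only [hmvdef, hμdef]
    ring
  have hc0 : c = 0 := by
    have hσrel : ∀ σ : L ≃ₐ[ℚ] L, ∑ i, algebraMap ℚ L (mv i) * β (ind σ i) = algebraMap ℚ L c := by
      intro σ
      have h : σ (∑ i, algebraMap ℚ L (mv i) * β i) = σ (algebraMap ℚ L c) := by rw [hrelL]
      rw [map_sum] at h
      have h2 : ∀ i : Fin 4, σ (algebraMap ℚ L (mv i) * β i) = algebraMap ℚ L (mv i) * β (ind σ i) := by
        intro i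
        rw [map_mul, AlgEquiv.commutes, hind]
      rw [Finset.sum_congr rfl (fun i _ => h2 i), AlgEquiv.commutes] at h
      exact h
    have htot : (Fintype.card (L ≃ₐ[ℚ] L)) • algebraMap ℚ L c = 0 := by
      calc (Fintype.card (L ≃ₐ[ℚ] L)) • algebraMap ℚ L c
          = ∑ _σ : L ≃ₐ[ℚ] L, algebraMap ℚ L c := by rw [Finset.sum_const, Finset.card_univ]
        _ = ∑ σ : L ≃ₐ[ℚ] L, ∑ i, algebraMap ℚ L (mv i) * β (ind σ i) :=
            (Finset.sum_congr rfl (fun σ _ => (hσrel σ).symm))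
        _ = ∑ i, ∑ σ : L ≃ₐ[ℚ] L, algebraMap ℚ L (mv i) * β (ind σ i) := Finset.sum_comm
        _ = ∑ i, algebraMap ℚ L (mv i) * ∑ σ : L ≃ₐ[ℚ] L, β (ind σ i) := by
            apply Finset.sum_congr rfl; intro i _; rw [Finset.mul_sum]
        _ = ∑ i, algebraMap ℚ L (mv i) * ∑ σ : L ≃ₐ[ℚ] L, β (ind σ 0) := by
            apply Finset.sum_congr rfl; intro i _; rw [hS i]
        _ = (∑ i, algebraMap ℚ L (mv i)) * ∑ σ : L ≃ₐ[ℚ] L, β (ind σ 0) := by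
            rw [Finset.sum_mul]
        _ = 0 := by
            rw [← map_sum, hmvsum, map_zero, zero_mul]
    rw [nsmul_eq_mul] at htot
    have hcardne : ((Fintype.card (L ≃ₐ[ℚ] L) : ℕ) : L) ≠ 0 := by
      exact_mod_cast Nat.cast_ne_zero.mpr Fintype.card_ne_zero
    have := mul_eq_zero.mp htot
    rcases this with h | h
    · exact absurd h hcardne
    · exact (algebraMap ℚ L).injective (by simpa using h)
  have hmvR : ∑ i, algebraMap ℚ L (mv i) * β i = 0 := by
    rw [hrelL, hc0, map_zero]
  have hmv0 : mv ≠ 0 := by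
    intro h
    obtain ⟨i, j, hij⟩ := hne
    apply hij
    have hi := congrFun h i
    have hj := congrFun h j
    simp only [hmvdef, Pi.zero_apply] at hi hj
    linarith
  -- fixed-point-free involution
  obtain ⟨σ0, hσ0⟩ := fpf_exists ind hind_mul hind_one (fun i j => htrans i j)
  set e0 : Equiv.Perm (Fin 4) := Equiv.ofBijective (ind σ0) (hind_bij σ0) with he0def
  have he0coe : ∀ x, e0 x = ind σ0 x := fun x => rfl
  have he0fpf : ∀ x, e0 x ≠ x := fun x => by rw [he0coe]; exact hσ0 x
  have hcoreargs : ∃ ι : Equiv.Perm (Fin 4), (∀ x, ι (ι x) = x) ∧ (∀ x, ι x ≠ x) ∧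
      (∀ v : Fin 4 → ℚ, (∑ i, algebraMap ℚ L (v i) * β i = 0) →
        (∑ i, algebraMap ℚ L (v (ι i)) * β i = 0)) := by
    rcases perm_sq_or e0 he0fpf with hsq | hsq
    · exact ⟨e0, hsq, he0fpf, fun v hv => hRcomp σ0 v hv⟩
    · refine ⟨e0.trans e0, ?_, ?_, ?_⟩
      · intro x
        exact perm_four e0 he0fpf hsq x
      · intro x
        exact hsq x
      · intro v hv
        exact hRcomp σ0 (fun j => v (ind σ0 j)) (hRcomp σ0 v hv)
  obtain ⟨ι, hι, hιfpf, hιR⟩ := hcoreargs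
  have htranscore : ∀ i j : Fin 4, ∃ e : Equiv.Perm (Fin 4), e i = j ∧
      ∀ v : Fin 4 → ℚ, (∑ i, algebraMap ℚ L (v i) * β i = 0) →
        (∑ i, algebraMap ℚ L (v (e i)) * β i = 0) := by
    intro i j
    obtain ⟨σ, hσ⟩ := htrans i j
    exact ⟨Equiv.ofBijective (ind σ) (hind_bij σ), hσ, fun v hv => hRcomp σ v hv⟩
  obtain ⟨a, b, cc, d, hab, hac, had, hbc, hbd, hcd, hpair⟩ :=
    core β hβinj ι hι hιfpf hιR htranscore mv hmv0 hmvsum hmvR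
  -- transport pairing to ℂ
  have hpairC : α a + α b = α cc + α d := by
    rw [← hψβ a, ← hψβ b, ← hψβ cc, ← hψβ d, ← map_add, ← map_add, hpair]
  -- transport done; now build the decomposition
  have hc3c : ((f.coeff 3 : ℚ) : ℂ) = -(α 0 + α 1 + α 2 + α 3) := by
    rw [← hcast]; exact hc3
  have hsumall : α a + α b + α cc + α d = α 0 + α 1 + α 2 + α 3 := by
    rw [← sum4 hab hac had hbc hbd hcd α, Fin.sum_univ_four]
  set s : ℚ := -(f.coeff 3) / 2 with hsdef
  have hcs : algebraMap ℚ ℂ s = α a + α b := by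
    rw [hcast, hsdef]
    push_cast
    linear_combination (-(1/2 : ℂ)) * hc3c - (1/2 : ℂ) * hsumall - (1/2 : ℂ) * hpairC
  have hcs2 : algebraMap ℚ ℂ s = α cc + α d := by rw [hcs]; exact hpairC
  have hprod : f.map (algebraMap ℚ ℂ)
      = (X - C (α a)) * (X - C (α b)) * (X - C (α cc)) * (X - C (α d)) := by
    rw [hroots, prod4 hab hac had hbc hbd hcd]
  have hc2 : algebraMap ℚ ℂ (f.coeff 2)
      = α a * α b + α a * α cc + α a * α d + α b * α cc + α b * α d + α cc * α d := by
    have h := congrArg (fun p => Polynomial.coeff p 2) hprod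
    simp only [coeff_map] at h
    rw [h, prodX]
    simp only [coeff_add, coeff_sub, coeff_C_mul, coeff_X_pow, coeff_C, coeff_X]
    norm_num
  have hc0' : algebraMap ℚ ℂ (f.coeff 0) = α a * α b * α cc * α d := by
    have h := congrArg (fun p => Polynomial.coeff p 0) hprod
    simp only [coeff_map] at h
    rw [h, prodX]
    simp only [coeff_add, coeff_sub, coeff_C_mul, coeff_X_pow, coeff_C, coeff_X]
    norm_num
  refine ⟨C 1 * X^2 + C (f.coeff 2 - s^2) * X + C (f.coeff 0),
          C 1 * X^2 + C (-s) * X + C 0, natDegree_quadratic one_ne_zero,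
          natDegree_quadratic one_ne_zero, ?_⟩
  apply Polynomial.map_injective (algebraMap ℚ ℂ) (algebraMap ℚ ℂ).injective
  rw [Polynomial.map_comp, hprod]
  apply Polynomial.funext
  intro x
  have hAB : α b = algebraMap ℚ ℂ s - α a := by linear_combination -hcs
  have hD : α d = algebraMap ℚ ℂ s - α cc := by linear_combination -hcs2
  rw [hAB, hD] at hc2 hc0' ⊢
  simp only [Polynomial.map_add, Polynomial.map_mul, Polynomial.map_pow, Polynomial.map_sub,
    Polynomial.map_neg, map_C, map_X, eval_comp, eval_add, eval_mul, eval_pow, eval_C, eval_X,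
    eval_sub, eval_neg, map_one, map_neg, map_zero, map_sub, map_pow, one_mul, add_zero]
  linear_combination (-(x^2 - (algebraMap ℚ ℂ s) * x)) * hc2 - hc0'
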